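/- Let q, p ∈ ℂ with q ≠ 0 and p² = q, and let Q1, Q2, Q3 ∈ ℂ with 1 − Q1Q2 q^{1−i} ≠ 0 for every integer i ≥ 1. Suppose (b̃_k)_{k≥0} is a sequence of complex numbers satisfying, for every k ≥ 0 (with b̃_{−1} = b̃_{−2} = 0), the recursion q^k b̃_k + (1+Q1Q3) p q^{k−1} b̃_{k−1} + Q1Q3 q^{k−1} b̃_{k−2} = b̃_k + Q1(1+Q2Q3) p b̃_{k−1} + Q1²Q2Q3 q b̃_{k−2}. Define ã_k := b̃_k · ∏_{i=1}^k (1 − Q1Q2 q^{1−i})^{-1}. Then for every k ≥ 0 (with ã_{−1} = ã_{−2} = 0), (1 − Q1Q2 q^{2−k})(1 − Q1Q2 q^{1−k}) q^{−k} ã_k + Q1(1+Q2Q3) p^{−1} q^{1−k} (1 − Q1Q2 q^{2−k}) ã_{k−1} + Q1²Q2Q3 q^{1−k} ã_{k−2} = (1 − Q1Q2 q^{2−k})(1 − Q1Q2 q^{1−k}) ã_k + (1+Q1Q3) p^{−1} (1 − Q1Q2 q^{2−k}) ã_{k−1} + Q1Q3 q^{−1} ã_{k−2}. -/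

import Mathlib

/-- Theorem 3 of the paper: if `(b̃_k)` satisfies the recursion
coming from the `q`-difference equation for `Φ̃`, and
`ã_k = b̃_k ∏_{i=1}^k (1 − Q1Q2 q^{1−i})⁻¹`, then the `ã_k` satisfy the
coefficient recursion of the `q`-difference equation (tPsi-qd-eq).
Here `p` plays the role of `q^{1/2}` (`p² = q`). -/
theorem closed_topological_vertex_PsiTilde_qdifference
    (q p Q1 Q2 Q3 : ℂ) (hq : q ≠ 0) (hp : p ^ 2 = q)
    (hQ : ∀ i : ℕ, 1 - Q1 * Q2 * q ^ (-(i : ℤ)) ≠ 0)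
    (b : ℤ → ℂ) (hbneg : ∀ m : ℤ, m < 0 → b m = 0)
    (hrec : ∀ k : ℤ, 0 ≤ k →
      q ^ k * b k + (1 + Q1 * Q3) * p * q ^ (k - 1) * b (k - 1)
          + Q1 * Q3 * q ^ (k - 1) * b (k - 2) =
        b k + Q1 * (1 + Q2 * Q3) * p * b (k - 1) + Q1 ^ 2 * Q2 * Q3 * q * b (k - 2))
    (a : ℤ → ℂ)
    (ha : ∀ m : ℤ, a m = b m * ∏ i ∈ Finset.range m.toNat, (1 - Q1 * Q2 * q ^ (-(i : ℤ)))⁻¹) :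
    ∀ k : ℤ, 0 ≤ k →
      (1 - Q1 * Q2 * q ^ (2 - k)) * (1 - Q1 * Q2 * q ^ (1 - k)) * q ^ (-k) * a k
          + Q1 * (1 + Q2 * Q3) * p⁻¹ * q ^ (1 - k) * (1 - Q1 * Q2 * q ^ (2 - k)) * a (k - 1)
          + Q1 ^ 2 * Q2 * Q3 * q ^ (1 - k) * a (k - 2) =
        (1 - Q1 * Q2 * q ^ (2 - k)) * (1 - Q1 * Q2 * q ^ (1 - k)) * a k
          + (1 + Q1 * Q3) * p⁻¹ * (1 - Q1 * Q2 * q ^ (2 - k)) * a (k - 1)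
          + Q1 * Q3 * q⁻¹ * a (k - 2) := by
  have hp0 : p ≠ 0 := by
    intro h; apply hq; rw [← hp, h]; ring
  have hq1 : q * q⁻¹ = 1 := mul_inv_cancel₀ hq
  have hp1 : p * p⁻¹ = 1 := mul_inv_cancel₀ hp0
  intro k hk
  lift k to ℕ using hk with n
  rcases n with _ | _ | m
  · -- n = 0
    have ham1 : a (((0:ℕ):ℤ) - 1) = 0 := by
      rw [ha, hbneg _ (by norm_num), zero_mul]
    have ham2 : a (((0:ℕ):ℤ) - 2) = 0 := by
      rw [ha, hbneg _ (by norm_num), zero_mul]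
    rw [ham1, ham2]
    norm_num
  · -- n = 1
    push_cast
    have ham1 : a (-1) = 0 := by
      rw [ha, hbneg _ (by norm_num), zero_mul]
    have ha1 : a 1 = b 1 * (1 - Q1 * Q2)⁻¹ := by
      rw [ha]; norm_num
    have ha0 : a 0 = b 0 := by
      rw [ha]; norm_num
    have hB : (1:ℂ) - Q1 * Q2 ≠ 0 := by simpa using hQ 0
    have hBB : ((1:ℂ) - Q1 * Q2) * (1 - Q1 * Q2)⁻¹ = 1 := mul_inv_cancel₀ hB
    have h3 := hrec 1 (by norm_num)
    rw [show (1:ℤ) - 2 = -1 by norm_num, hbneg (-1) (by norm_num)] at h3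
    norm_num at h3
    rw [ham1, ha1, ha0]
    simp only [zpow_one, zpow_zero, zpow_neg_one]
    linear_combination
      ((1 - Q1*Q2*q) * (q⁻¹ * b 1 - b 1)) * hBB
      + (-((1 - Q1*Q2*q) * q⁻¹)) * h3
      + ((1 - Q1*Q2*q) * (b 1 + ((1+Q1*Q3) - Q1*(1+Q2*Q3)) * b 0 * p⁻¹)) * hq1
      + ((1 - Q1*Q2*q) * ((1+Q1*Q3) - Q1*(1+Q2*Q3)) * b 0 * p⁻¹ * q⁻¹) * hp
      + (-((1 - Q1*Q2*q) * ((1+Q1*Q3) - Q1*(1+Q2*Q3)) * b 0 * p * q⁻¹)) * hp1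
  · -- n = m + 2
    push_cast
    have hXY : q ^ m * (q ^ m)⁻¹ = 1 := mul_inv_cancel₀ (pow_ne_zero m hq)
    have hg1 : (1 : ℂ) - Q1 * Q2 * q ^ (-((m+1 : ℕ) : ℤ)) = 1 - Q1 * Q2 * ((q ^ m)⁻¹ * q⁻¹) := by
      rw [show -((m+1 : ℕ) : ℤ) = -(m:ℤ) + (-1) by push_cast; ring, zpow_add₀ hq,
        zpow_neg, zpow_neg_one, zpow_natCast]
    have hg0 : (1 : ℂ) - Q1 * Q2 * q ^ (-((m : ℕ) : ℤ)) = 1 - Q1 * Q2 * (q ^ m)⁻¹ := by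
      rw [zpow_neg, zpow_natCast]
    have hprod1 : (∏ i ∈ Finset.range (m+1), (1 - Q1 * Q2 * q ^ (-(i : ℤ)))⁻¹)
        = (∏ i ∈ Finset.range (m+1+1), (1 - Q1 * Q2 * q ^ (-(i : ℤ)))⁻¹)
          * (1 - Q1 * Q2 * ((q ^ m)⁻¹ * q⁻¹)) := by
      rw [← hg1]
      conv_rhs => rw [Finset.prod_range_succ]
      rw [mul_assoc, inv_mul_cancel₀ (hQ (m+1)), mul_one]
    have hprod2 : (∏ i ∈ Finset.range m, (1 - Q1 * Q2 * q ^ (-(i : ℤ)))⁻¹)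
        = (∏ i ∈ Finset.range (m+1+1), (1 - Q1 * Q2 * q ^ (-(i : ℤ)))⁻¹)
          * (1 - Q1 * Q2 * ((q ^ m)⁻¹ * q⁻¹)) * (1 - Q1 * Q2 * (q ^ m)⁻¹) := by
      rw [← hprod1, ← hg0]
      conv_rhs => rw [Finset.prod_range_succ]
      rw [mul_assoc, inv_mul_cancel₀ (hQ m), mul_one]
    have haK : a ((m:ℤ) + 1 + 1) = b ((m:ℤ) + 1 + 1)
        * ∏ i ∈ Finset.range (m+1+1), (1 - Q1 * Q2 * q ^ (-(i : ℤ)))⁻¹ := by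
      rw [ha, show ((m:ℤ) + 1 + 1).toNat = m + 1 + 1 by omega]
    have haK1 : a ((m:ℤ) + 1) = b ((m:ℤ) + 1)
        * ((∏ i ∈ Finset.range (m+1+1), (1 - Q1 * Q2 * q ^ (-(i : ℤ)))⁻¹)
          * (1 - Q1 * Q2 * ((q ^ m)⁻¹ * q⁻¹))) := by
      rw [ha, show ((m:ℤ) + 1).toNat = m + 1 by omega, hprod1]
    have haK2 : a ((m:ℤ)) = b ((m:ℤ))
        * ((∏ i ∈ Finset.range (m+1+1), (1 - Q1 * Q2 * q ^ (-(i : ℤ)))⁻¹)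
          * (1 - Q1 * Q2 * ((q ^ m)⁻¹ * q⁻¹)) * (1 - Q1 * Q2 * (q ^ m)⁻¹)) := by
      rw [ha, show ((m:ℤ)).toNat = m by omega, hprod2]
    have h3 := hrec ((m:ℤ) + 1 + 1) (by positivity)
    rw [show ((m:ℤ) + 1 + 1) - 1 = (m:ℤ) + 1 by ring,
        show ((m:ℤ) + 1 + 1) - 2 = (m:ℤ) by ring] at h3
    simp only [zpow_add₀ hq, zpow_one, zpow_natCast] at h3
    rw [show (2:ℤ) - ((m:ℤ) + 1 + 1) = -(m:ℤ) by ring,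
        show (1:ℤ) - ((m:ℤ) + 1 + 1) = -(m:ℤ) + (-1) by ring,
        show -((m:ℤ) + 1 + 1) = -(m:ℤ) + (-1) + (-1) by ring,
        show ((m:ℤ) + 1 + 1) - 1 = (m:ℤ) + 1 by ring,
        show ((m:ℤ) + 1 + 1) - 2 = (m:ℤ) by ring]
    simp only [zpow_add₀ hq, zpow_neg, zpow_one, zpow_natCast]
    rw [haK, haK1, haK2]
    set P := ∏ i ∈ Finset.range (m+1+1), (1 - Q1 * Q2 * q ^ (-(i : ℤ)))⁻¹ with hP
    set W := (1 - Q1 * Q2 * (q ^ m)⁻¹) * (1 - Q1 * Q2 * ((q ^ m)⁻¹ * q⁻¹)) * P with hW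
    linear_combination
      (-(W * (q ^ m)⁻¹ * q⁻¹ * q⁻¹)) * h3
      + (W * (q * q⁻¹) * (b ((m:ℤ)+1+1) * (q * q⁻¹)
          + (1 + Q1*Q3) * b ((m:ℤ)+1) * p * q⁻¹ + Q1*Q3 * b ((m:ℤ)) * q⁻¹)) * hXY
      + (W * (b ((m:ℤ)+1+1) * (q * q⁻¹ + 1)
          + (1 + Q1*Q3) * b ((m:ℤ)+1) * (p * q⁻¹ + p⁻¹)
          - Q1 * (1 + Q2*Q3) * b ((m:ℤ)+1) * (q ^ m)⁻¹ * q⁻¹ * p⁻¹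
          + Q1*Q3 * b ((m:ℤ)) * q⁻¹
          - Q1^2*Q2*Q3 * b ((m:ℤ)) * (q ^ m)⁻¹ * q⁻¹)) * hq1
      + (W * b ((m:ℤ)+1) * q⁻¹ * p
          * (Q1 * (1 + Q2*Q3) * (q ^ m)⁻¹ * q⁻¹ - (1 + Q1*Q3))) * hp1
      + (W * b ((m:ℤ)+1) * p⁻¹ * q⁻¹
          * ((1 + Q1*Q3) - Q1 * (1 + Q2*Q3) * (q ^ m)⁻¹ * q⁻¹)) * hp
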